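/- The matrix M = [[3,0,1],[0,2,1],[1,1,1]] cannot be written as a finite product of non-negative elementary 3×3 matrices (i.e., matrices that are either permutation matrices or the identity plus a single off-diagonal entry equal to 1). -/

import Mathlib

/-- A non-negative elementary 3×3 matrix: a permutation matrix or I + E_{ij} (i ≠ j). -/
def IsElem3 (M : Matrix (Fin 3) (Fin 3) ℤ) : Prop :=
  (∃ p : Equiv.Perm (Fin 3), M = Matrix.of fun i j => if p j = i then 1 else 0) ∨
  (∃ i j : Fin 3, i ≠ j ∧ M = 1 + Matrix.single i j 1)

private def Pm9 (σ : Equiv.Perm (Fin 3)) : Matrix (Fin 3) (Fin 3) ℤ :=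
  Matrix.of fun i j => if σ j = i then 1 else 0

private def Mm9 : Matrix (Fin 3) (Fin 3) ℤ := !![3, 0, 1; 0, 2, 1; 1, 1, 1]

private lemma elem_nonneg9 {A : Matrix (Fin 3) (Fin 3) ℤ} (h : IsElem3 A) :
    ∀ i j, 0 ≤ A i j := by
  rcases h with ⟨p, rfl⟩ | ⟨i, j, _, rfl⟩
  · intro a b; simp only [Matrix.of_apply]; split <;> norm_num
  · intro a b
    simp only [Matrix.add_apply, Matrix.one_apply, Matrix.single]
    simp only [Matrix.of_apply]
    split <;> split <;> norm_num

private lemma prod_nonneg9 : ∀ L : List (Matrix (Fin 3) (Fin 3) ℤ),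
    (∀ A ∈ L, IsElem3 A) → ∀ i j, 0 ≤ L.prod i j := by
  intro L
  induction L with
  | nil =>
    intro _ i j
    simp [Matrix.one_apply]
    split <;> norm_num
  | cons A L ih =>
    intro h i j
    have hA := elem_nonneg9 (h A (by simp))
    have hL := ih (fun B hB => h B (by simp [hB]))
    rw [List.prod_cons, Matrix.mul_apply]
    exact Finset.sum_nonneg fun k _ => mul_nonneg (hA i k) (hL k j)

private lemma key9 : ∀ L : List (Matrix (Fin 3) (Fin 3) ℤ),
    (∀ A ∈ L, IsElem3 A) → ∀ σ : Equiv.Perm (Fin 3), L.prod ≠ Pm9 σ * Mm9 := by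
  intro L
  induction L with
  | nil =>
    intro _ σ
    simp only [List.prod_nil]
    exact (by decide : ∀ σ : Equiv.Perm (Fin 3),
      (1 : Matrix (Fin 3) (Fin 3) ℤ) ≠ Pm9 σ * Mm9) σ
  | cons A L ih =>
    intro h σ hEq
    rw [List.prod_cons] at hEq
    have hL : ∀ B ∈ L, IsElem3 B := fun B hB => h B (by simp [hB])
    rcases h A (by simp) with ⟨τ, rfl⟩ | ⟨i, j, hij, rfl⟩
    · -- A = Pm9 τ
      have hmul : ∀ a b : Equiv.Perm (Fin 3), Pm9 a * Pm9 b = Pm9 (a * b) := by decide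
      have hinv : Pm9 τ⁻¹ * Pm9 τ = 1 :=
        (by decide : ∀ τ : Equiv.Perm (Fin 3), Pm9 τ⁻¹ * Pm9 τ = 1) τ
      have : L.prod = Pm9 (τ⁻¹ * σ) * Mm9 := by
        have h1 : L.prod = Pm9 τ⁻¹ * (Pm9 τ * L.prod) := by
          rw [← Matrix.mul_assoc, hinv, Matrix.one_mul]
        have hEq' : Pm9 τ * L.prod = Pm9 σ * Mm9 := hEq
        rw [h1, hEq', ← Matrix.mul_assoc, hmul]
      exact ih hL (τ⁻¹ * σ) this
    · -- A = 1 + E i j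
      obtain ⟨b, hb⟩ := (by decide : ∀ σ : Equiv.Perm (Fin 3), ∀ i j : Fin 3, i ≠ j →
        ∃ b, (Pm9 σ * Mm9) i b < (Pm9 σ * Mm9) j b) σ i j hij
      have hib : L.prod i b + L.prod j b = (Pm9 σ * Mm9) i b := by
        have := congrArg (fun N => N i b) hEq
        simpa [Matrix.add_mul, Matrix.add_apply] using this
      have hjb : L.prod j b = (Pm9 σ * Mm9) j b := by
        have := congrArg (fun N => N j b) hEq
        have h0 : (Matrix.single i j (1:ℤ) * L.prod) j b = 0 :=
          Matrix.single_mul_apply_of_ne 1 i j j b (Ne.symm hij) L.prod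
        simpa [Matrix.add_mul, Matrix.add_apply, h0] using this
      have hnn := prod_nonneg9 L hL i b
      omega

/-- [[3,0,1],[0,2,1],[1,1,1]] is not a finite product of
non-negative elementary matrices. -/
theorem stmt_9 :
    ¬ ∃ L : List (Matrix (Fin 3) (Fin 3) ℤ),
      (∀ A ∈ L, IsElem3 A) ∧
      L.prod = (!![3, 0, 1; 0, 2, 1; 1, 1, 1] : Matrix (Fin 3) (Fin 3) ℤ) := by
  rintro ⟨L, hL, hprod⟩
  have h1 : Pm9 1 * Mm9 = Mm9 := by decide
  exact key9 L hL 1 (by rw [h1]; exact hprod)
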